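/- Let q be a prime power, F a finite field with q² elements, and δ a generator of F^×. Let i, j ∈ ZMod (q²-1) with i ≢ j (mod q-1), and let k(i,j) = j - y_{i,j}·(q-1) ∈ ZMod (q²-1). Then δ^{k(i,j)} · (δ^i + δ^j)^q = (δ^i + δ^j) · (δ^j)^q in F. -/

import Mathlib

/-- The canonical reduction ring homomorphism `ZMod (q²-1) → ZMod (q-1)`,
which exists since `(q-1) ∣ (q²-1)`. -/
def red (q : ℕ) : ZMod (q ^ 2 - 1) →+* ZMod (q - 1) :=
  ZMod.castHom (by simpa using Nat.sub_dvd_pow_sub_pow q 1 2) (ZMod (q - 1))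

theorem stmt4 (q : ℕ) (hq : IsPrimePow q) (F : Type*) [Field F] [Fintype F]
    (hF : Fintype.card F = q ^ 2) (δ : Fˣ) (hδ : Subgroup.zpowers δ = ⊤)
    (i j : ZMod (q ^ 2 - 1)) (hij : red q i ≠ red q j)
    (x : ZMod (q ^ 2 - 1))
    (hx : ((δ ^ x.val : Fˣ) : F) = 1 + ((δ ^ (j - i).val : Fˣ) : F))
    (y k : ZMod (q ^ 2 - 1)) (hy : y = x + i - j)
    (hk : k = j - y * ((q - 1 : ℕ) : ZMod (q ^ 2 - 1))) :
    ((δ ^ k.val : Fˣ) : F) * (((δ ^ i.val : Fˣ) : F) + ((δ ^ j.val : Fˣ) : F)) ^ q =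
      (((δ ^ i.val : Fˣ) : F) + ((δ ^ j.val : Fˣ) : F)) * ((δ ^ j.val : Fˣ) : F) ^ q := by
  have hq1 : 1 < q := hq.one_lt
  have hsq : q ^ 2 = q * q := sq q
  have h4 : 2 * 2 ≤ q * q := Nat.mul_le_mul hq1 hq1
  have h5 : 2 * q ≤ q * q := Nat.mul_le_mul_right q hq1
  have hn : 1 < q ^ 2 - 1 := by omega
  have hqn : q < q ^ 2 - 1 := by omega
  haveI : NeZero (q ^ 2 - 1) := ⟨by omega⟩
  have hord : orderOf δ = q ^ 2 - 1 := by
    have h1 : orderOf δ = Nat.card Fˣ := by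
      apply orderOf_eq_card_of_forall_mem_zpowers
      intro g
      rw [hδ]; trivial
    rw [h1, Nat.card_units, Nat.card_eq_fintype_card, hF]
  have key : ∀ a b : ZMod (q ^ 2 - 1), δ ^ (a + b).val = δ ^ a.val * δ ^ b.val := by
    intro a b
    conv_rhs => rw [← pow_add, ← pow_mod_orderOf, hord]
    rw [ZMod.val_add]
  have keyq : ∀ a : ZMod (q ^ 2 - 1),
      δ ^ (a * ((q : ℕ) : ZMod (q ^ 2 - 1))).val = (δ ^ a.val) ^ q := by
    intro a
    conv_rhs => rw [← pow_mul, ← pow_mod_orderOf, hord]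
    rw [ZMod.val_mul, ZMod.val_natCast_of_lt hqn]
  -- δ^i + δ^j = δ^(i+x) in F
  have hsum : ((δ ^ i.val : Fˣ) : F) + ((δ ^ j.val : Fˣ) : F) = ((δ ^ (i + x).val : Fˣ) : F) := by
    have h2 : ((δ ^ (i + x).val : Fˣ) : F) = (δ ^ i.val : Fˣ) * ((δ ^ x.val : Fˣ) : F) := by
      rw [key i x]; push_cast; ring
    rw [h2, hx, mul_add, mul_one]
    have h3 : ((δ ^ i.val : Fˣ) : F) * ((δ ^ (j - i).val : Fˣ) : F) = ((δ ^ j.val : Fˣ) : F) := by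
      have := key i (j - i)
      have hji : i + (j - i) = j := by ring
      rw [hji] at this
      rw [this]; push_cast; ring
    rw [h3]
  rw [hsum]
  -- now reduce to an exponent identity in ZMod (q^2-1)
  have main : δ ^ k.val * (δ ^ (i + x).val) ^ q = δ ^ (i + x).val * (δ ^ j.val) ^ q := by
    rw [← keyq (i + x), ← keyq j, ← key k, ← key (i + x)]
    congr 1
    have hcast : ((q - 1 : ℕ) : ZMod (q ^ 2 - 1)) = ((q : ℕ) : ZMod (q ^ 2 - 1)) - 1 := by
      push_cast [Nat.cast_sub hq1.le]; ring
    rw [hk, hy, hcast]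
    ring
  calc ((δ ^ k.val : Fˣ) : F) * ((δ ^ (i + x).val : Fˣ) : F) ^ q
      = ((δ ^ k.val * (δ ^ (i + x).val) ^ q : Fˣ) : F) := by push_cast; ring
    _ = ((δ ^ (i + x).val * (δ ^ j.val) ^ q : Fˣ) : F) := by rw [main]
    _ = ((δ ^ (i + x).val : Fˣ) : F) * ((δ ^ j.val : Fˣ) : F) ^ q := by push_cast; ring
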